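/- Let m₁, m₂, m₃ > 0 and t ≥ 0 be real numbers, and set Ψ(x,y,z) = xy + yz + zx and Ξ(x,y,z) = t·xyz + (m₁²x + m₂²y + m₃²z)·Ψ(x,y,z). Then the function (x, y, w) ↦ Ψ(x + w, y, 1)/Ξ(x + w, y, 1)² is Lebesgue integrable on (0,∞)³, the function (x, y) ↦ x·Ψ(x, y, 1)/Ξ(x, y, 1)² is Lebesgue integrable on (0,∞)², and ∫_{(0,∞)³} Ψ(x + w, y, 1)/Ξ(x + w, y, 1)² dx dy dw = ∫_{(0,∞)²} x·Ψ(x, y, 1)/Ξ(x, y, 1)² dx dy. (This is the affine-chart statement that the d = 2 Feynman integral of the graph obtained from the sunrise by subdividing the edge e₁ once equals the integral over the sunrise of the modified integrand α₁·Ψ_G/Ξ_G²·Ω_G, the analytic content of the subdivision-of-edges correspondence for a single subdivision.) -/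

import Mathlib

open MeasureTheory Set ENNReal

/-- The first Symanzik polynomial of the sunrise graph. -/
def sunrisePsi (x y z : ℝ) : ℝ := x * y + y * z + z * x

/-- The second Symanzik polynomial of the sunrise graph, with masses `m₁, m₂, m₃` and
momentum invariant `t = q₁²`. -/
def sunriseXi (m₁ m₂ m₃ t x y z : ℝ) : ℝ :=
  t * x * y * z + (m₁ ^ 2 * x + m₂ ^ 2 * y + m₃ ^ 2 * z) * sunrisePsi x y z

section helpers

lemma sunrise_shift (h : ℝ → ℝ≥0∞) (x : ℝ) :
    ∫⁻ w in Ioi (0:ℝ), h (x + w) = ∫⁻ s in Ioi x, h s := by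
  have hmp : MeasurePreserving (fun w : ℝ => x + w) volume volume :=
    measurePreserving_add_left volume x
  have := hmp.setLIntegral_comp_emb (measurableEmbedding_addLeft x) h (Ioi 0)
  rwa [image_const_add_Ioi, add_zero] at this

lemma sunrise_key (h : ℝ → ℝ≥0∞) (hm : Measurable h) :
    ∫⁻ x in Ioi (0:ℝ), ∫⁻ w in Ioi (0:ℝ), h (x + w) =
      ∫⁻ s in Ioi (0:ℝ), ENNReal.ofReal s * h s := by
  have h1 : ∀ x ∈ Ioi (0:ℝ), ∫⁻ w in Ioi (0:ℝ), h (x + w)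
      = ∫⁻ s in Ioi (0:ℝ), (Ioi x).indicator h s := by
    intro x hx
    rw [sunrise_shift, lintegral_indicator measurableSet_Ioi,
      Measure.restrict_restrict measurableSet_Ioi,
      inter_eq_left.2 (Ioi_subset_Ioi (le_of_lt hx))]
  rw [setLIntegral_congr_fun measurableSet_Ioi h1]
  rw [lintegral_lintegral_swap]
  · have h2 : ∀ s ∈ Ioi (0:ℝ), ∫⁻ x in Ioi (0:ℝ), (Ioi x).indicator h s
        = ENNReal.ofReal s * h s := by
      intro s hs
      have : ∀ x, (Ioi x).indicator h s = (Iio s).indicator (fun _ => h s) x := by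
        intro x
        by_cases hxs : x < s
        · simp [Set.indicator_apply, hxs]
        · simp [Set.indicator_apply, hxs]
      simp_rw [this]
      rw [lintegral_indicator measurableSet_Iio, Measure.restrict_restrict measurableSet_Iio,
        lintegral_const, Measure.restrict_apply MeasurableSet.univ, univ_inter,
        Iio_inter_Ioi, Real.volume_Ioo, mul_comm]
      simp
    exact setLIntegral_congr_fun measurableSet_Ioi h2
  · have : (Function.uncurry fun x => (Ioi x).indicator h)
        = fun p : ℝ × ℝ => {q : ℝ × ℝ | q.1 < q.2}.indicator (fun q => h q.2) p := by
      funext p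
      by_cases hp : p.1 < p.2
      · simp [Function.uncurry, Set.indicator_apply, hp]
      · simp [Function.uncurry, Set.indicator_apply, hp]
    unfold Function.uncurry at this ⊢
    rw [this]
    exact (Measurable.indicator (hm.comp measurable_snd)
      (measurableSet_lt measurable_fst measurable_snd)).aemeasurable

lemma sunrise_integral_aux {a : ℝ} (ha : 0 < a) :
    IntegrableOn (fun s : ℝ => ((s + a) ^ 2)⁻¹) (Ioi 0) ∧
    ∫ s in Ioi (0:ℝ), ((s + a) ^ 2)⁻¹ = a⁻¹ := by
  have hderiv : ∀ x ∈ Ici (0:ℝ), HasDerivAt (fun s : ℝ => -(s + a)⁻¹) (((x + a) ^ 2)⁻¹) x := by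
    intro x hx
    have hxa : x + a ≠ 0 := ne_of_gt (by have := mem_Ici.mp hx; linarith)
    have := ((hasDerivAt_id x).add_const a).inv hxa
    refine this.neg.congr_deriv ?_
    simp only [id, neg_div, neg_neg, one_div]
  have hpos : ∀ x ∈ Ioi (0:ℝ), 0 ≤ ((x + a) ^ 2)⁻¹ := fun x hx => by positivity
  have htend : Filter.Tendsto (fun s : ℝ => -(s + a)⁻¹) Filter.atTop (nhds 0) := by
    rw [← neg_zero]
    exact (Filter.Tendsto.inv_tendsto_atTop
      (Filter.tendsto_atTop_add_const_right _ a Filter.tendsto_id)).neg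
  constructor
  · exact integrableOn_Ioi_deriv_of_nonneg' hderiv hpos htend
  · rw [integral_Ioi_of_hasDerivAt_of_nonneg' hderiv hpos htend]
    simp

lemma sunrise_lintegral_aux {a : ℝ} (ha : 0 < a) :
    ∫⁻ s in Ioi (0:ℝ), ENNReal.ofReal (((s + a) ^ 2)⁻¹) = ENNReal.ofReal a⁻¹ := by
  obtain ⟨hint, hval⟩ := sunrise_integral_aux ha
  rw [← hval, ← ofReal_integral_eq_lintegral_ofReal hint]
  exact Filter.Eventually.of_forall fun x => by positivity

variable {m₁ m₂ m₃ t : ℝ} (h₁ : 0 < m₁) (h₂ : 0 < m₂) (h₃ : 0 < m₃) (ht : 0 ≤ t)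

lemma sunrise_psi_pos {x y : ℝ} (hx : 0 < x) (hy : 0 < y) : 0 < sunrisePsi x y 1 := by
  unfold sunrisePsi; nlinarith

omit h₁ h₂ h₃ in
include ht in
lemma sunrise_xi_lower {x y : ℝ} (hx : 0 < x) (hy : 0 < y) :
    min (m₁ ^ 2) (min (m₂ ^ 2) (m₃ ^ 2)) * ((x + y + 1) * sunrisePsi x y 1)
      ≤ sunriseXi m₁ m₂ m₃ t x y 1 := by
  set c := min (m₁ ^ 2) (min (m₂ ^ 2) (m₃ ^ 2)) with hc
  have hc1 : c ≤ m₁ ^ 2 := min_le_left _ _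
  have hc2 : c ≤ m₂ ^ 2 := le_trans (min_le_right _ _) (min_le_left _ _)
  have hc3 : c ≤ m₃ ^ 2 := le_trans (min_le_right _ _) (min_le_right _ _)
  have hp := sunrise_psi_pos hx hy
  unfold sunriseXi sunrisePsi
  unfold sunrisePsi at hp
  nlinarith [mul_nonneg (mul_nonneg (sub_nonneg.2 hc1) hx.le) hp.le,
    mul_nonneg (mul_nonneg (sub_nonneg.2 hc2) hy.le) hp.le,
    mul_nonneg (sub_nonneg.2 hc3) hp.le,
    mul_nonneg (mul_nonneg ht hx.le) hy.le]

include h₁ h₂ h₃ ht in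
lemma sunrise_xi_pos {x y : ℝ} (hx : 0 < x) (hy : 0 < y) : 0 < sunriseXi m₁ m₂ m₃ t x y 1 := by
  have hc : 0 < min (m₁ ^ 2) (min (m₂ ^ 2) (m₃ ^ 2)) := by positivity
  have hl := sunrise_xi_lower ht hx hy (m₁ := m₁) (m₂ := m₂) (m₃ := m₃)
  have h0 : 0 < min (m₁ ^ 2) (min (m₂ ^ 2) (m₃ ^ 2)) * ((x + y + 1) * sunrisePsi x y 1) := by
    apply mul_pos hc
    apply mul_pos (by linarith) (sunrise_psi_pos hx hy)
  linarith

include h₁ h₂ h₃ ht in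
lemma sunrise_main_bound {x y : ℝ} (hx : 0 < x) (hy : 0 < y) :
    x * sunrisePsi x y 1 / (sunriseXi m₁ m₂ m₃ t x y 1) ^ 2
      ≤ (min (m₁ ^ 2) (min (m₂ ^ 2) (m₃ ^ 2)) ^ 2)⁻¹ * ((y + 1)⁻¹ * ((x + (y + 1)) ^ 2)⁻¹) := by
  set c := min (m₁ ^ 2) (min (m₂ ^ 2) (m₃ ^ 2)) with hcdef
  have hc : 0 < c := by positivity
  have hp := sunrise_psi_pos hx hy
  have hXpos := sunrise_xi_pos h₁ h₂ h₃ ht hx hy (t := t)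
  have hXl := sunrise_xi_lower ht hx hy (m₁ := m₁) (m₂ := m₂) (m₃ := m₃)
  rw [div_le_iff₀ (by positivity)]
  have key : x * sunrisePsi x y 1 * (c ^ 2 * ((y + 1) * (x + (y + 1)) ^ 2))
      ≤ sunriseXi m₁ m₂ m₃ t x y 1 ^ 2 := by
    have h1 : (c * ((x + y + 1) * sunrisePsi x y 1)) ^ 2 ≤ sunriseXi m₁ m₂ m₃ t x y 1 ^ 2 := by
      apply sq_le_sq' _ hXl
      have h0 : 0 ≤ c * ((x + y + 1) * sunrisePsi x y 1) :=
        mul_nonneg hc.le (mul_nonneg (by linarith) hp.le)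
      linarith
    have h2 : x * (y + 1) ≤ sunrisePsi x y 1 := by unfold sunrisePsi; nlinarith
    calc x * sunrisePsi x y 1 * (c ^ 2 * ((y + 1) * (x + (y + 1)) ^ 2))
        ≤ sunrisePsi x y 1 * sunrisePsi x y 1 * (c ^ 2 * (x + (y + 1)) ^ 2) := by nlinarith
      _ = (c * ((x + y + 1) * sunrisePsi x y 1)) ^ 2 := by ring_nf
      _ ≤ _ := h1
  calc x * sunrisePsi x y 1
      = x * sunrisePsi x y 1 * (c ^ 2 * ((y + 1) * (x + (y + 1)) ^ 2))
        * ((c ^ 2)⁻¹ * ((y + 1)⁻¹ * ((x + (y + 1)) ^ 2)⁻¹)) := by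
        field_simp
    _ ≤ sunriseXi m₁ m₂ m₃ t x y 1 ^ 2 * ((c ^ 2)⁻¹ * ((y + 1)⁻¹ * ((x + (y + 1)) ^ 2)⁻¹)) :=
        mul_le_mul_of_nonneg_right key
          (mul_nonneg (inv_nonneg.2 (sq_nonneg c))
            (mul_nonneg (inv_nonneg.2 (by linarith)) (inv_nonneg.2 (sq_nonneg _))))
    _ = (c ^ 2)⁻¹ * ((y + 1)⁻¹ * ((x + (y + 1)) ^ 2)⁻¹) * sunriseXi m₁ m₂ m₃ t x y 1 ^ 2 := by
        ring

end helpers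

noncomputable def srF (m₁ m₂ m₃ t s y : ℝ) : ℝ :=
  sunrisePsi s y 1 / (sunriseXi m₁ m₂ m₃ t s y 1) ^ 2

noncomputable def srH (m₁ m₂ m₃ t s : ℝ) : ℝ≥0∞ :=
  ∫⁻ y in Ioi (0:ℝ), ENNReal.ofReal (srF m₁ m₂ m₃ t s y)

lemma srF_measurable (m₁ m₂ m₃ t : ℝ) :
    Measurable fun p : ℝ × ℝ => srF m₁ m₂ m₃ t p.1 p.2 := by
  unfold srF sunrisePsi sunriseXi
  apply Measurable.div
  · exact Continuous.measurable (by continuity)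
  · exact Continuous.measurable (by continuity)

lemma srH_measurable (m₁ m₂ m₃ t : ℝ) : Measurable (srH m₁ m₂ m₃ t) := by
  unfold srH
  exact Measurable.lintegral_prod_right' ((srF_measurable m₁ m₂ m₃ t).ennreal_ofReal)

lemma sr_e2 : (volume : Measure (ℝ × ℝ)).restrict (Ioi 0 ×ˢ Ioi 0)
    = (volume.restrict (Ioi (0:ℝ))).prod (volume.restrict (Ioi (0:ℝ))) := by
  rw [Measure.volume_eq_prod]
  exact (Measure.prod_restrict _ _).symm

lemma sr_e3 : (volume : Measure (ℝ × ℝ × ℝ)).restrict (Ioi 0 ×ˢ Ioi 0 ×ˢ Ioi 0)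
    = (volume.restrict (Ioi (0:ℝ))).prod
        ((volume.restrict (Ioi (0:ℝ))).prod (volume.restrict (Ioi (0:ℝ)))) := by
  rw [Measure.volume_eq_prod, ← Measure.prod_restrict, sr_e2]

lemma sr_L2_eq (m₁ m₂ m₃ t : ℝ) :
    ∫⁻ p in Ioi (0:ℝ) ×ˢ Ioi (0:ℝ), ENNReal.ofReal (p.1 * srF m₁ m₂ m₃ t p.1 p.2)
      = ∫⁻ s in Ioi (0:ℝ), ENNReal.ofReal s * srH m₁ m₂ m₃ t s := by
  have hmeas : Measurable fun p : ℝ × ℝ => ENNReal.ofReal (p.1 * srF m₁ m₂ m₃ t p.1 p.2) :=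
    (measurable_fst.mul (srF_measurable m₁ m₂ m₃ t)).ennreal_ofReal
  rw [sr_e2, lintegral_prod _ hmeas.aemeasurable]
  apply setLIntegral_congr_fun measurableSet_Ioi
  intro s hs
  have hmy : Measurable fun y => ENNReal.ofReal (srF m₁ m₂ m₃ t s y) :=
    ((srF_measurable m₁ m₂ m₃ t).comp (measurable_prodMk_left (x := s))).ennreal_ofReal
  simp only
  simp_rw [ENNReal.ofReal_mul (le_of_lt hs)]
  rw [lintegral_const_mul _ hmy]
  rfl

lemma sr_L3_eq (m₁ m₂ m₃ t : ℝ) :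
    ∫⁻ q in Ioi (0:ℝ) ×ˢ Ioi (0:ℝ) ×ˢ Ioi (0:ℝ),
        ENNReal.ofReal (srF m₁ m₂ m₃ t (q.1 + q.2.2) q.2.1)
      = ∫⁻ s in Ioi (0:ℝ), ENNReal.ofReal s * srH m₁ m₂ m₃ t s := by
  have hmeas : Measurable fun q : ℝ × ℝ × ℝ =>
      ENNReal.ofReal (srF m₁ m₂ m₃ t (q.1 + q.2.2) q.2.1) :=
    ((srF_measurable m₁ m₂ m₃ t).comp
      ((measurable_fst.add (measurable_snd.comp measurable_snd)).prodMk
        (measurable_fst.comp measurable_snd))).ennreal_ofReal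
  rw [sr_e3, lintegral_prod _ hmeas.aemeasurable]
  refine Eq.trans (lintegral_congr fun x => ?_) (sunrise_key _ (srH_measurable m₁ m₂ m₃ t))
  have hm : Measurable fun p : ℝ × ℝ => ENNReal.ofReal (srF m₁ m₂ m₃ t (x + p.2) p.1) :=
    ((srF_measurable m₁ m₂ m₃ t).comp
      (((measurable_const.add measurable_snd)).prodMk measurable_fst)).ennreal_ofReal
  show (∫⁻ p : ℝ × ℝ, ENNReal.ofReal (srF m₁ m₂ m₃ t (x + p.2) p.1)
      ∂((volume.restrict (Ioi (0:ℝ))).prod (volume.restrict (Ioi (0:ℝ)))))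
    = ∫⁻ w in Ioi (0:ℝ), srH m₁ m₂ m₃ t (x + w)
  rw [lintegral_prod_symm _ hm.aemeasurable]
  rfl

lemma sr_L2_lt_top {m₁ m₂ m₃ t : ℝ} (h₁ : 0 < m₁) (h₂ : 0 < m₂) (h₃ : 0 < m₃) (ht : 0 ≤ t) :
    ∫⁻ p in Ioi (0:ℝ) ×ˢ Ioi (0:ℝ), ENNReal.ofReal (p.1 * srF m₁ m₂ m₃ t p.1 p.2) < ⊤ := by
  set c := min (m₁ ^ 2) (min (m₂ ^ 2) (m₃ ^ 2)) with hcdef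
  have hc : 0 < c := by positivity
  have hmeas : Measurable fun p : ℝ × ℝ => ENNReal.ofReal (p.1 * srF m₁ m₂ m₃ t p.1 p.2) :=
    (measurable_fst.mul (srF_measurable m₁ m₂ m₃ t)).ennreal_ofReal
  have hinv : Measurable fun y : ℝ => (y + 1)⁻¹ := (measurable_id.add_const 1).inv
  have hinvsq : ∀ a : ℝ, Measurable fun s : ℝ => ((s + a) ^ 2)⁻¹ := fun a =>
    ((measurable_id.add_const a).pow_const 2).inv
  rw [sr_e2, lintegral_prod_symm _ hmeas.aemeasurable]
  have hbound : ∀ y ∈ Ioi (0:ℝ),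
      (∫⁻ s in Ioi (0:ℝ), ENNReal.ofReal ((s, y).1 * srF m₁ m₂ m₃ t (s, y).1 (s, y).2))
        ≤ ENNReal.ofReal ((c ^ 2)⁻¹ * (y + 1)⁻¹) * ENNReal.ofReal (y + 1)⁻¹ := by
    intro y hy
    have hy0 : (0:ℝ) < y := hy
    calc ∫⁻ s in Ioi (0:ℝ), ENNReal.ofReal (s * srF m₁ m₂ m₃ t s y)
        ≤ ∫⁻ s in Ioi (0:ℝ),
            ENNReal.ofReal ((c ^ 2)⁻¹ * (y + 1)⁻¹ * ((s + (y + 1)) ^ 2)⁻¹) := by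
          apply setLIntegral_mono
          · exact (measurable_const.mul (hinvsq (y + 1))).ennreal_ofReal
          · intro s hs
            apply ENNReal.ofReal_le_ofReal
            have hb := sunrise_main_bound h₁ h₂ h₃ ht hs hy0
            rw [mul_div_assoc] at hb
            unfold srF
            calc s * (sunrisePsi s y 1 / sunriseXi m₁ m₂ m₃ t s y 1 ^ 2)
                ≤ (c ^ 2)⁻¹ * ((y + 1)⁻¹ * ((s + (y + 1)) ^ 2)⁻¹) := hb
              _ = (c ^ 2)⁻¹ * (y + 1)⁻¹ * ((s + (y + 1)) ^ 2)⁻¹ := by ring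
      _ = ENNReal.ofReal ((c ^ 2)⁻¹ * (y + 1)⁻¹)
            * ∫⁻ s in Ioi (0:ℝ), ENNReal.ofReal (((s + (y + 1)) ^ 2)⁻¹) := by
          simp_rw [ENNReal.ofReal_mul (mul_nonneg (inv_nonneg.2 (sq_nonneg c))
            (inv_nonneg.2 (by linarith : (0:ℝ) ≤ y + 1)))]
          rw [lintegral_const_mul _ (hinvsq (y + 1)).ennreal_ofReal]
      _ = ENNReal.ofReal ((c ^ 2)⁻¹ * (y + 1)⁻¹) * ENNReal.ofReal (y + 1)⁻¹ := by
          rw [sunrise_lintegral_aux (by linarith : (0:ℝ) < y + 1)]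
  have houter : ∀ y ∈ Ioi (0:ℝ),
      ENNReal.ofReal ((c ^ 2)⁻¹ * (y + 1)⁻¹) * ENNReal.ofReal (y + 1)⁻¹
        = ENNReal.ofReal (c ^ 2)⁻¹ * ENNReal.ofReal (((y + 1) ^ 2)⁻¹) := by
    intro y hy
    have hy0 : (0:ℝ) < y := hy
    rw [ENNReal.ofReal_mul (inv_nonneg.2 (sq_nonneg c)), mul_assoc,
      ← ENNReal.ofReal_mul (inv_nonneg.2 (by linarith : (0:ℝ) ≤ y + 1)),
      ← mul_inv, ← sq]
  calc ∫⁻ y in Ioi (0:ℝ), ∫⁻ s in Ioi (0:ℝ),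
          ENNReal.ofReal ((s, y).1 * srF m₁ m₂ m₃ t (s, y).1 (s, y).2)
      ≤ ∫⁻ y in Ioi (0:ℝ),
          ENNReal.ofReal ((c ^ 2)⁻¹ * (y + 1)⁻¹) * ENNReal.ofReal (y + 1)⁻¹ := by
        exact setLIntegral_mono
          ((measurable_const.mul hinv).ennreal_ofReal.mul hinv.ennreal_ofReal) hbound
    _ = ∫⁻ y in Ioi (0:ℝ), ENNReal.ofReal (c ^ 2)⁻¹ * ENNReal.ofReal (((y + 1) ^ 2)⁻¹) :=
        setLIntegral_congr_fun measurableSet_Ioi houter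
    _ = ENNReal.ofReal (c ^ 2)⁻¹ * ∫⁻ y in Ioi (0:ℝ), ENNReal.ofReal (((y + 1) ^ 2)⁻¹) := by
        rw [lintegral_const_mul _ (hinvsq 1).ennreal_ofReal]
    _ = ENNReal.ofReal (c ^ 2)⁻¹ * ENNReal.ofReal (1:ℝ)⁻¹ := by
        rw [sunrise_lintegral_aux one_pos]
    _ < ⊤ := ENNReal.mul_lt_top ENNReal.ofReal_lt_top ENNReal.ofReal_lt_top

/-- Subdivision of edges for the sunrise, in the affine chart `α₃ = 1`: the `d = 2` Feynman
integral of the graph obtained from the sunrise by subdividing the edge `e₁` once (an integral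
over `(0,∞)³`) equals the integral over the sunrise of the modified integrand
`α₁·Ψ/Ξ²`; both integrands are Lebesgue integrable on their domains. -/
theorem sunrise_subdivision_integral
    (m₁ m₂ m₃ t : ℝ) (h₁ : 0 < m₁) (h₂ : 0 < m₂) (h₃ : 0 < m₃) (ht : 0 ≤ t) :
    IntegrableOn
      (fun q : ℝ × ℝ × ℝ =>
        sunrisePsi (q.1 + q.2.2) q.2.1 1 / (sunriseXi m₁ m₂ m₃ t (q.1 + q.2.2) q.2.1 1) ^ 2)
      (Ioi (0 : ℝ) ×ˢ Ioi (0 : ℝ) ×ˢ Ioi (0 : ℝ)) ∧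
    IntegrableOn
      (fun q : ℝ × ℝ =>
        q.1 * sunrisePsi q.1 q.2 1 / (sunriseXi m₁ m₂ m₃ t q.1 q.2 1) ^ 2)
      (Ioi (0 : ℝ) ×ˢ Ioi (0 : ℝ)) ∧
    ∫ q in Ioi (0 : ℝ) ×ˢ Ioi (0 : ℝ) ×ˢ Ioi (0 : ℝ),
        sunrisePsi (q.1 + q.2.2) q.2.1 1 / (sunriseXi m₁ m₂ m₃ t (q.1 + q.2.2) q.2.1 1) ^ 2 =
      ∫ q in Ioi (0 : ℝ) ×ˢ Ioi (0 : ℝ),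
        q.1 * sunrisePsi q.1 q.2 1 / (sunriseXi m₁ m₂ m₃ t q.1 q.2 1) ^ 2 := by
  simp only [mul_div_assoc]
  have hS3 : MeasurableSet (Ioi (0:ℝ) ×ˢ Ioi (0:ℝ) ×ˢ Ioi (0:ℝ)) :=
    measurableSet_Ioi.prod (measurableSet_Ioi.prod measurableSet_Ioi)
  have hS2 : MeasurableSet (Ioi (0:ℝ) ×ˢ Ioi (0:ℝ)) :=
    measurableSet_Ioi.prod measurableSet_Ioi
  have hf3m : Measurable fun q : ℝ × ℝ × ℝ =>
      sunrisePsi (q.1 + q.2.2) q.2.1 1 / sunriseXi m₁ m₂ m₃ t (q.1 + q.2.2) q.2.1 1 ^ 2 :=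
    (srF_measurable m₁ m₂ m₃ t).comp
      ((measurable_fst.add (measurable_snd.comp measurable_snd)).prodMk
        (measurable_fst.comp measurable_snd))
  have hf2m : Measurable fun q : ℝ × ℝ =>
      q.1 * (sunrisePsi q.1 q.2 1 / sunriseXi m₁ m₂ m₃ t q.1 q.2 1 ^ 2) :=
    measurable_fst.mul (srF_measurable m₁ m₂ m₃ t)
  have hae3 : 0 ≤ᵐ[volume.restrict (Ioi (0:ℝ) ×ˢ Ioi (0:ℝ) ×ˢ Ioi (0:ℝ))]
      fun q : ℝ × ℝ × ℝ =>
        sunrisePsi (q.1 + q.2.2) q.2.1 1 / sunriseXi m₁ m₂ m₃ t (q.1 + q.2.2) q.2.1 1 ^ 2 := by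
    apply ae_restrict_of_forall_mem hS3
    intro q hq
    have hx : (0:ℝ) < q.1 := hq.1
    have hy : (0:ℝ) < q.2.1 := hq.2.1
    have hw : (0:ℝ) < q.2.2 := hq.2.2
    exact div_nonneg (sunrise_psi_pos (add_pos hx hw) hy).le (sq_nonneg _)
  have hae2 : 0 ≤ᵐ[volume.restrict (Ioi (0:ℝ) ×ˢ Ioi (0:ℝ))]
      fun q : ℝ × ℝ => q.1 * (sunrisePsi q.1 q.2 1 / sunriseXi m₁ m₂ m₃ t q.1 q.2 1 ^ 2) := by
    apply ae_restrict_of_forall_mem hS2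
    intro q hq
    have hx : (0:ℝ) < q.1 := hq.1
    have hy : (0:ℝ) < q.2 := hq.2
    exact mul_nonneg hx.le (div_nonneg (sunrise_psi_pos hx hy).le (sq_nonneg _))
  have hL3 : (∫⁻ q in Ioi (0:ℝ) ×ˢ Ioi (0:ℝ) ×ˢ Ioi (0:ℝ),
      ENNReal.ofReal
        (sunrisePsi (q.1 + q.2.2) q.2.1 1 / sunriseXi m₁ m₂ m₃ t (q.1 + q.2.2) q.2.1 1 ^ 2))
      = ∫⁻ p in Ioi (0:ℝ) ×ˢ Ioi (0:ℝ),
          ENNReal.ofReal (p.1 * (sunrisePsi p.1 p.2 1 / sunriseXi m₁ m₂ m₃ t p.1 p.2 1 ^ 2)) :=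
    (sr_L3_eq m₁ m₂ m₃ t).trans (sr_L2_eq m₁ m₂ m₃ t).symm
  have hL2top : (∫⁻ p in Ioi (0:ℝ) ×ˢ Ioi (0:ℝ),
      ENNReal.ofReal (p.1 * (sunrisePsi p.1 p.2 1 / sunriseXi m₁ m₂ m₃ t p.1 p.2 1 ^ 2))) < ⊤ :=
    sr_L2_lt_top h₁ h₂ h₃ ht
  refine ⟨⟨hf3m.aestronglyMeasurable, ?_⟩, ⟨hf2m.aestronglyMeasurable, ?_⟩, ?_⟩
  · rw [hasFiniteIntegral_iff_ofReal hae3]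
    exact hL3.trans_lt hL2top
  · rw [hasFiniteIntegral_iff_ofReal hae2]
    exact hL2top
  · rw [integral_eq_lintegral_of_nonneg_ae hae3 hf3m.aestronglyMeasurable,
      integral_eq_lintegral_of_nonneg_ae hae2 hf2m.aestronglyMeasurable]
    exact congrArg ENNReal.toReal hL3
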